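/- Let R_1,…,R_ν be independent with R_t uniformly distributed on {1,…,t}, let U_t : {1,…,t} → ℝ be given functions, and set Y_t = U_t(R_t). Define b_1 = −∞, b_2 = (1/ν) ∑_{r=1}^{ν} U_ν(r), and b_{t+1} = (1/(ν−t+1)) ∑_{r=1}^{ν−t+1} max(b_t, U_{ν−t+1}(r)) for t = 2,…,ν. Let τ* = min{1 ≤ t ≤ ν : Y_t > b_{ν−t+1}}. Then E[Y_{τ*}] = sup over stopping times τ ∈ 𝒯(ℛ) of E[Y_τ] = b_{ν+1}. -/

import Mathlib

open MeasureTheory ProbabilityTheory Finset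
open scoped ENNReal Classical

noncomputable section

/-- The σ-algebra on `Ω` generated by the functions `f 1, …, f t`. -/
def genFilt {Ω β : Type*} [MeasurableSpace β] (f : ℕ → Ω → β) (t : ℕ) :
    MeasurableSpace Ω :=
  ⨆ i ∈ Set.Icc 1 t, MeasurableSpace.comap (f i) inferInstance

/-- `τ` is a stopping time with values in `{1,…,n}` of the filtration generated by `f`. -/
def IsStopTime {Ω β : Type*} [MeasurableSpace β] (f : ℕ → Ω → β) (n : ℕ) (τ : Ω → ℕ) : Prop :=
  (∀ ω, τ ω ∈ Set.Icc 1 n) ∧ ∀ t, MeasurableSet[genFilt f t] {ω | τ ω = t}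

/-- The family `(f i)_{i ∈ s}` is independent under `μ`. -/
def IndepSeq {Ω β : Type*} [MeasurableSpace Ω] [MeasurableSpace β]
    (f : ℕ → Ω → β) (s : Set ℕ) (μ : Measure Ω) : Prop :=
  iIndepFun (m := fun _ : s => (inferInstance : MeasurableSpace β)) (fun i : s => f i.1) μ

/-- `N` is independent of the family `(f i)_{i ∈ s}`. -/
def IndepOfSeq {Ω β : Type*} [MeasurableSpace Ω] [MeasurableSpace β]
    (N : Ω → ℕ) (f : ℕ → Ω → β) (s : Set ℕ) (μ : Measure Ω) : Prop :=
  IndepFun N (fun ω (i : s) => f i.1 ω) μ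

/-- The absolute rank `A_{t,k}` of `X t` among `X 1, …, X k`
(the largest observation has rank 1). -/
def absRank {Ω : Type*} (X : ℕ → Ω → ℝ) (t k : ℕ) (ω : Ω) : ℕ :=
  ((Finset.Icc 1 k).filter fun j => X t ω ≤ X j ω).card

/-- The relative rank `R_t = A_{t,t}`. -/
def relRank {Ω : Type*} (X : ℕ → Ω → ℝ) (t : ℕ) (ω : Ω) : ℕ := absRank X t t ω

/-- `(X i)_{i ∈ s}` are i.i.d. with an atomless (continuous) common distribution. -/
def IIDContinuousOn {Ω : Type*} [MeasurableSpace Ω] (X : ℕ → Ω → ℝ) (s : Set ℕ)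
    (μ : Measure Ω) : Prop :=
  (∀ i ∈ s, Measurable (X i)) ∧ IndepSeq X s μ ∧
  (∀ i ∈ s, ∀ j ∈ s, IdentDistrib (X i) (X j) μ μ) ∧
  (∀ i ∈ s, ∀ x : ℝ, μ {ω | X i ω = x} = 0)

/-- optimal stopping of `Y t = U t (R t)` for independent `R t` uniform on
`{1,…,t}`: with `b 2 = (1/ν) ∑_{r=1}^{ν} U ν r` and
`b (t+1) = (1/(ν−t+1)) ∑_{r=1}^{ν−t+1} max (b t) (U (ν−t+1) r)` for `t = 2,…,ν`, the rule
`τ* = min{1 ≤ t ≤ ν : Y t > b (ν−t+1)}` (with `b 1 = −∞`, so `τ* ≤ ν`) satisfies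
`E[Y_{τ*}] = sup_{τ ∈ 𝒯(ℛ)} E[Y_τ] = b (ν+1)`. -/
theorem stmt_8 {Ω : Type*} [MeasurableSpace Ω] (μ : Measure Ω) [IsProbabilityMeasure μ]
    (ν : ℕ) (hν : 1 ≤ ν)
    (R : ℕ → Ω → ℕ) (hRmeas : ∀ t, Measurable (R t))
    (hRindep : IndepSeq R (Set.Icc 1 ν) μ)
    (hRunif : ∀ t ∈ Set.Icc 1 ν, ∀ r ∈ Set.Icc 1 t, μ {ω | R t ω = r} = ((t : ℝ≥0∞))⁻¹)
    (hRrange : ∀ t ∈ Set.Icc 1 ν, ∀ ω, R t ω ∈ Set.Icc 1 t)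
    (U : ℕ → ℕ → ℝ)
    (Y : ℕ → Ω → ℝ) (hY : ∀ t ω, Y t ω = U t (R t ω))
    (b : ℕ → ℝ)
    (hb2 : b 2 = (ν : ℝ)⁻¹ * ∑ r ∈ Finset.Icc 1 ν, U ν r)
    (hbrec : ∀ t, 2 ≤ t → t ≤ ν →
      b (t + 1) = ((ν - t + 1 : ℕ) : ℝ)⁻¹ *
        ∑ r ∈ Finset.Icc 1 (ν - t + 1), max (b t) (U (ν - t + 1) r))
    (τstar : Ω → ℕ)
    (hτstar : ∀ ω, τstar ω =
      sInf ({t | t ∈ Set.Icc 1 (ν - 1) ∧ Y t ω > b (ν - t + 1)} ∪ {ν})) :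
    (∫ ω, Y (τstar ω) ω ∂μ) = b (ν + 1) ∧
    IsGreatest {x : ℝ | ∃ τ : Ω → ℕ, IsStopTime R ν τ ∧ x = ∫ ω, Y (τ ω) ω ∂μ}
      (b (ν + 1)) := by
    classical
  -- ambient measurability of the generated filtration
  have hle : ∀ (c : ℕ) (s : Set Ω), MeasurableSet[genFilt R c] s → MeasurableSet s := by
    intro c s hs
    exact (iSup₂_le (fun i _ => (hRmeas i).comap_le) : genFilt R c ≤ _) s hs
  have hgmono : ∀ {a c : ℕ}, a ≤ c → genFilt R a ≤ genFilt R c := by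
    intro a c hac
    exact iSup₂_le fun i hi =>
      le_iSup₂ (f := fun i (_ : i ∈ Set.Icc 1 c) => MeasurableSpace.comap (R i) inferInstance)
        i ⟨hi.1, hi.2.trans hac⟩
  have hYfun : ∀ t, Y t = fun ω => U t (R t ω) := fun t => funext (hY t)
  -- integrability
  have hintg : ∀ (g : ℕ → ℝ) (t : ℕ), 1 ≤ t → t ≤ ν → Integrable (fun ω => g (R t ω)) μ := by
    intro g t h1 h2
    refine (integrable_const (∑ r ∈ Finset.Icc 1 t, |g r|)).mono'
      ((measurable_from_top.comp (hRmeas t)).aestronglyMeasurable) (ae_of_all _ fun ω => ?_)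
    have hr := hRrange t ⟨h1, h2⟩ ω
    simp only [Real.norm_eq_abs]
    exact Finset.single_le_sum (f := fun r => |g r|) (fun r _ => abs_nonneg _)
      (Finset.mem_Icc.mpr ⟨hr.1, hr.2⟩)
  -- independence of the past from R t
  have hindep : ∀ (A : Set Ω) (c t : ℕ), MeasurableSet[genFilt R c] A → c < t → t ≤ ν →
      ∀ B : Set ℕ, μ (A ∩ R t ⁻¹' B) = μ A * μ (R t ⁻¹' B) := by
    intro A c t hA hct htν B
    have ht1 : 1 ≤ t := by omega
    set S : Set ↥(Set.Icc 1 ν) := {i | (i : ℕ) ≤ c} with hS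
    set T : Set ↥(Set.Icc 1 ν) := {i | (i : ℕ) = t} with hT
    have hST : Disjoint S T := by
      rw [Set.disjoint_left]
      rintro i hiS hiT
      have h1 : (i : ℕ) ≤ c := hiS
      have h2 : (i : ℕ) = t := hiT
      omega
    have hbig :
        Indep (⨆ i ∈ S, MeasurableSpace.comap (R (i : ℕ)) inferInstance)
          (⨆ i ∈ T, MeasurableSpace.comap (R (i : ℕ)) inferInstance) μ :=
      indep_iSup_of_disjoint (fun (i : ↥(Set.Icc 1 ν)) => (hRmeas (i : ℕ)).comap_le)
        (ProbabilityTheory.iIndepFun.iIndep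
          (show iIndepFun (m := fun _ : ↥(Set.Icc 1 ν) => (inferInstance : MeasurableSpace ℕ))
            (fun i : ↥(Set.Icc 1 ν) => R i.1) μ from hRindep)) hST
    have hAle : MeasurableSet[⨆ i ∈ S, MeasurableSpace.comap (R (i : ℕ)) inferInstance] A := by
      refine (iSup₂_le fun i hi => ?_ : genFilt R c ≤ _) A hA
      exact le_iSup₂ (f := fun (j : ↥(Set.Icc 1 ν)) (_ : j ∈ S) =>
        MeasurableSpace.comap (R (j : ℕ)) inferInstance)
        ⟨i, ⟨hi.1, hi.2.trans (by omega)⟩⟩ hi.2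
    have hBle : MeasurableSet[⨆ i ∈ T, MeasurableSpace.comap (R (i : ℕ)) inferInstance]
        (R t ⁻¹' B) := by
      have hcle : MeasurableSpace.comap (R t) inferInstance ≤
          ⨆ i ∈ T, MeasurableSpace.comap (R (i : ℕ)) inferInstance :=
        le_iSup₂ (f := fun (j : ↥(Set.Icc 1 ν)) (_ : j ∈ T) =>
          MeasurableSpace.comap (R (j : ℕ)) inferInstance)
          ⟨t, ⟨ht1, htν⟩⟩ rfl
      exact hcle _ ⟨B, MeasurableSpace.measurableSet_top, rfl⟩
    exact (Indep_iff _ _ _).mp hbig _ _ hAle hBle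
  -- factorization of integrals against a past event
  have hfact : ∀ (A : Set Ω) (c t : ℕ) (g : ℕ → ℝ), MeasurableSet[genFilt R c] A → c < t →
      t ≤ ν →
      ∫ ω, A.indicator (fun ω' => g (R t ω')) ω ∂μ
        = (μ A).toReal * ((t : ℝ)⁻¹ * ∑ r ∈ Finset.Icc 1 t, g r) := by
    intro A c t g hA hct htν
    have ht1 : 1 ≤ t := by omega
    have hAm : MeasurableSet A := hle c A hA
    have hmeas : ∀ r : ℕ, MeasurableSet (A ∩ R t ⁻¹' {r}) :=
      fun r => hAm.inter (hRmeas t (measurableSet_singleton r))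
    have hpt : (fun ω => A.indicator (fun ω' => g (R t ω')) ω)
        = fun ω => ∑ r ∈ Finset.Icc 1 t, (A ∩ R t ⁻¹' {r}).indicator (fun _ => g r) ω := by
      funext ω
      have hr := hRrange t ⟨ht1, htν⟩ ω
      rw [Finset.sum_eq_single (R t ω)]
      · by_cases hA' : ω ∈ A
        · simp [Set.indicator_apply, hA']
        · simp [Set.indicator_apply, hA']
      · intro r _ hne
        exact Set.indicator_of_notMem (fun h => hne (Set.mem_singleton_iff.mp h.2).symm) _
      · intro habs
        exact absurd (Finset.mem_Icc.mpr ⟨hr.1, hr.2⟩) habs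
    rw [hpt, integral_finset_sum _ (fun r _ => (integrable_const (g r)).indicator (hmeas r))]
    have hterm : ∀ r ∈ Finset.Icc 1 t,
        ∫ ω, (A ∩ R t ⁻¹' {r}).indicator (fun _ => g r) ω ∂μ
          = (μ A).toReal * ((t : ℝ)⁻¹ * g r) := by
      intro r hrmem
      rw [integral_indicator_const _ (hmeas r), measureReal_def, hindep A c t hA hct htν {r}]
      have hpre : μ (R t ⁻¹' {r}) = ((t : ℝ≥0∞))⁻¹ := by
        have := hRunif t ⟨ht1, htν⟩ r
          ⟨(Finset.mem_Icc.mp hrmem).1, (Finset.mem_Icc.mp hrmem).2⟩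
        rw [← this]
        rfl
      rw [hpre, ENNReal.toReal_mul, smul_eq_mul]
      have htr : ((t : ℝ≥0∞)⁻¹).toReal = (t : ℝ)⁻¹ := by
        rw [ENNReal.toReal_inv]; simp
      rw [htr]; ring
    rw [Finset.sum_congr rfl hterm, ← Finset.mul_sum, ← Finset.mul_sum]
  -- events {t ≤ τ} are in the past
  have hge_gen : ∀ (τ : Ω → ℕ), IsStopTime R ν τ → ∀ (c t : ℕ), t ≤ c + 1 →
      MeasurableSet[genFilt R c] {ω | t ≤ τ ω} := by
    intro τ hτ c t htc
    have hset : {ω | t ≤ τ ω} = (⋃ s ∈ Finset.range t, {ω | τ ω = s})ᶜ := by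
      ext ω
      simp only [Set.mem_setOf_eq, Set.mem_compl_iff, Set.mem_iUnion, Finset.mem_range,
        not_exists]
      constructor
      · intro h s hs heq
        omega
      · intro h
        by_contra h'
        exact h (τ ω) (by omega) rfl
    rw [hset]
    refine (Finset.measurableSet_biUnion _ fun s hs => ?_).compl
    have hs' := Finset.mem_range.mp hs
    exact hgmono (by omega) _ (hτ.2 s)
  -- the expectation decomposes over stopping values
  have hsum : ∀ (τ : Ω → ℕ), IsStopTime R ν τ →
      ∫ ω, Y (τ ω) ω ∂μ
        = ∑ s ∈ Finset.Icc 1 ν, ∫ ω, ({ω' | τ ω' = s}.indicator (Y s)) ω ∂μ := by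
    intro τ hτ
    have hmem : ∀ ω, τ ω ∈ Finset.Icc 1 ν :=
      fun ω => Finset.mem_Icc.mpr ⟨(hτ.1 ω).1, (hτ.1 ω).2⟩
    have hpt : ∀ ω, Y (τ ω) ω = ∑ s ∈ Finset.Icc 1 ν, ({ω' | τ ω' = s}.indicator (Y s)) ω := by
      intro ω
      rw [Finset.sum_eq_single (τ ω)]
      · simp [Set.indicator_apply]
      · intro s _ hne
        exact Set.indicator_of_notMem (s := {ω' | τ ω' = s}) (a := ω)
          (fun h => hne (h : τ ω = s).symm) (Y s)
      · intro habs; exact absurd (hmem ω) habs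
    calc ∫ ω, Y (τ ω) ω ∂μ
        = ∫ ω, ∑ s ∈ Finset.Icc 1 ν, ({ω' | τ ω' = s}.indicator (Y s)) ω ∂μ :=
          integral_congr_ae (Filter.Eventually.of_forall hpt)
      _ = _ := by
          refine integral_finset_sum _ fun s hs => ?_
          rw [hYfun s]
          exact (hintg (U s) s (Finset.mem_Icc.mp hs).1 (Finset.mem_Icc.mp hs).2).indicator
            (hle s _ (hτ.2 s))
  -- upper bound by backward induction
  have keyle : ∀ (τ : Ω → ℕ), IsStopTime R ν τ → ∀ (k t : ℕ), t + k = ν → 1 ≤ t →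
      ∑ s ∈ Finset.Icc t ν, ∫ ω, ({ω' | τ ω' = s}.indicator (Y s)) ω ∂μ
        ≤ (μ {ω | t ≤ τ ω}).toReal * b (k + 2) := by
    intro τ hτ k
    induction k with
    | zero =>
      intro t htk ht1
      have ht : t = ν := by omega
      subst ht
      rw [Finset.Icc_self, Finset.sum_singleton]
      have hset : {ω' | τ ω' = t} = {ω | t ≤ τ ω} := by
        ext ω
        have h2 := (hτ.1 ω).2
        simp only [Set.mem_setOf_eq]
        omega
      rw [hset, hYfun t,
        hfact _ (t - 1) t (U t) (hge_gen τ hτ (t - 1) t (by omega)) (by omega) le_rfl, ← hb2]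
    | succ k ih =>
      intro t htk ht1
      have hsplit : Finset.Icc t ν = insert t (Finset.Icc (t + 1) ν) := by
        ext x; simp only [Finset.mem_insert, Finset.mem_Icc]; omega
      have hnotmem : t ∉ Finset.Icc (t + 1) ν := by simp
      have hAup : MeasurableSet[genFilt R t] {ω | t + 1 ≤ τ ω} := hge_gen τ hτ t (t + 1) le_rfl
      have hAt : MeasurableSet[genFilt R (t - 1)] {ω | t ≤ τ ω} :=
        hge_gen τ hτ (t - 1) t (by omega)
      have hiY : Integrable ({ω' | τ ω' = t}.indicator (Y t)) μ := by
        rw [hYfun t]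
        exact (hintg (U t) t ht1 (by omega)).indicator (hle t _ (hτ.2 t))
      have hiB : Integrable ({ω | t + 1 ≤ τ ω}.indicator (fun _ => b (k + 2))) μ :=
        (integrable_const _).indicator (hle t _ hAup)
      have hiM : Integrable ({ω | t ≤ τ ω}.indicator (fun ω => max (b (k + 2)) (Y t ω))) μ := by
        simp only [hYfun]
        exact (hintg (fun r => max (b (k + 2)) (U t r)) t ht1 (by omega)).indicator
          (hle (t - 1) _ hAt)
      have hptle : ∀ ω, ({ω' | τ ω' = t}.indicator (Y t)) ω
            + ({ω | t + 1 ≤ τ ω}.indicator (fun _ => b (k + 2))) ω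
          ≤ ({ω | t ≤ τ ω}.indicator (fun ω => max (b (k + 2)) (Y t ω))) ω := by
        intro ω
        by_cases h1 : τ ω = t
        · have h2 : ¬ (t + 1 ≤ τ ω) := by omega
          have h3 : t ≤ τ ω := by omega
          simp [Set.indicator_apply, Set.mem_setOf_eq, h1, h2, h3, le_max_right]
        · by_cases h2 : t + 1 ≤ τ ω
          · have h3 : t ≤ τ ω := by omega
            simp [Set.indicator_apply, Set.mem_setOf_eq, h1, h2, h3, le_max_left, (show t < τ ω by omega)]
          · have h3 : ¬ (t ≤ τ ω) := by omega
            simp [Set.indicator_apply, Set.mem_setOf_eq, h1, h2, h3, (show ¬ t < τ ω by omega)]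
      have hbstep : b (k + 3) = (t : ℝ)⁻¹ * ∑ r ∈ Finset.Icc 1 t, max (b (k + 2)) (U t r) := by
        have h := hbrec (k + 2) (by omega) (by omega)
        rw [show ν - (k + 2) + 1 = t from by omega] at h
        exact h
      calc ∑ s ∈ Finset.Icc t ν, ∫ ω, ({ω' | τ ω' = s}.indicator (Y s)) ω ∂μ
          = ∫ ω, ({ω' | τ ω' = t}.indicator (Y t)) ω ∂μ
            + ∑ s ∈ Finset.Icc (t + 1) ν, ∫ ω, ({ω' | τ ω' = s}.indicator (Y s)) ω ∂μ := by
            rw [hsplit, Finset.sum_insert hnotmem]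
        _ ≤ ∫ ω, ({ω' | τ ω' = t}.indicator (Y t)) ω ∂μ
            + (μ {ω | t + 1 ≤ τ ω}).toReal * b (k + 2) :=
            (add_le_add_iff_left _).mpr (ih (t + 1) (by omega) (by omega))
        _ = ∫ ω, ({ω' | τ ω' = t}.indicator (Y t)) ω ∂μ
            + ∫ ω, ({ω | t + 1 ≤ τ ω}.indicator (fun _ => b (k + 2))) ω ∂μ := by
            rw [integral_indicator_const _ (hle t _ hAup), smul_eq_mul, measureReal_def]
        _ = ∫ ω, (({ω' | τ ω' = t}.indicator (Y t)) ω
            + ({ω | t + 1 ≤ τ ω}.indicator (fun _ => b (k + 2))) ω) ∂μ :=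
            (integral_add hiY hiB).symm
        _ ≤ ∫ ω, ({ω | t ≤ τ ω}.indicator (fun ω => max (b (k + 2)) (Y t ω))) ω ∂μ :=
            integral_mono (hiY.add hiB) hiM hptle
        _ = (μ {ω | t ≤ τ ω}).toReal
            * ((t : ℝ)⁻¹ * ∑ r ∈ Finset.Icc 1 t, max (b (k + 2)) (U t r)) := by
            simp only [hYfun]
            exact hfact _ (t - 1) t (fun r => max (b (k + 2)) (U t r)) hAt (by omega) (by omega)
        _ = (μ {ω | t ≤ τ ω}).toReal * b (k + 1 + 2) := by rw [← hbstep]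
  -- range of τstar
  have hrange : ∀ ω, 1 ≤ τstar ω ∧ τstar ω ≤ ν := by
    intro ω
    have hmem : τstar ω ∈ ({t | t ∈ Set.Icc 1 (ν - 1) ∧ Y t ω > b (ν - t + 1)} ∪ {ν} : Set ℕ) := by
      rw [hτstar ω]; exact Nat.sInf_mem ⟨ν, Or.inr rfl⟩
    rcases hmem with h | h
    · have h1 := Set.mem_Icc.mp h.1
      exact ⟨h1.1, by omega⟩
    · rw [Set.mem_singleton_iff] at h
      omega
  -- τstar is a stopping time
  have hstop : IsStopTime R ν τstar := by
    refine ⟨fun ω => Set.mem_Icc.mpr ⟨(hrange ω).1, (hrange ω).2⟩, fun t => ?_⟩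
    by_cases ht : 1 ≤ t ∧ t ≤ ν
    · have hset : {ω | τstar ω = t}
          = (⋂ u ∈ Finset.Icc 1 (t - 1), {ω | Y u ω ≤ b (ν - u + 1)})
            ∩ (if t = ν then Set.univ else {ω | b (ν - t + 1) < Y t ω}) := by
        ext ω
        simp only [Set.mem_inter_iff, Set.mem_iInter, Finset.mem_Icc, Set.mem_setOf_eq, and_imp]
        constructor
        · intro heq
          have hinf : sInf ({u | u ∈ Set.Icc 1 (ν - 1) ∧ Y u ω > b (ν - u + 1)} ∪ {ν}) = t := by
            rw [← hτstar ω]; exact heq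
          have hfor : ∀ u, 1 ≤ u → u < t → Y u ω ≤ b (ν - u + 1) := by
            intro u h1 h2
            by_contra hy
            have hle' : sInf ({u | u ∈ Set.Icc 1 (ν - 1) ∧ Y u ω > b (ν - u + 1)} ∪ {ν}) ≤ u :=
              Nat.sInf_le (Or.inl ⟨Set.mem_Icc.mpr ⟨h1, by omega⟩, lt_of_not_ge hy⟩)
            rw [hinf] at hle'
            omega
          refine ⟨fun u hu1 hu2 => hfor u hu1 (by omega), ?_⟩
          have hmem2 : t ∈ ({u | u ∈ Set.Icc 1 (ν - 1) ∧ Y u ω > b (ν - u + 1)} ∪ {ν} : Set ℕ) := by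
            rw [← hinf]; exact Nat.sInf_mem ⟨ν, Or.inr rfl⟩
          by_cases htν : t = ν
          · simp [htν]
          · rw [if_neg htν]
            rcases hmem2 with h | h
            · exact h.2
            · exact absurd (Set.mem_singleton_iff.mp h) htν
        · rintro ⟨hall, hcond⟩
          rw [hτstar ω]
          apply le_antisymm
          · apply Nat.sInf_le
            by_cases htν : t = ν
            · exact Or.inr (by simp [htν])
            · rw [if_neg htν] at hcond
              exact Or.inl ⟨Set.mem_Icc.mpr ⟨ht.1, by omega⟩, hcond⟩
          · refine le_csInf ⟨ν, Or.inr rfl⟩ ?_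
            rintro a (⟨ha1, ha2⟩ | ha)
            · by_contra h'
              have h1a := (Set.mem_Icc.mp ha1).1
              exact absurd ha2 (not_lt.mpr (hall a h1a (by omega)))
            · rw [Set.mem_singleton_iff] at ha
              omega
      rw [hset]
      refine MeasurableSet.inter ?_ ?_
      · refine Finset.measurableSet_biInter _ fun u hu => ?_
        have hu' := Finset.mem_Icc.mp hu
        have hcle : MeasurableSpace.comap (R u) inferInstance ≤ genFilt R t :=
          le_iSup₂ (f := fun i (_ : i ∈ Set.Icc 1 t) => MeasurableSpace.comap (R i) inferInstance)
            u ⟨hu'.1, by omega⟩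
        refine hcle _ ⟨{n | U u n ≤ b (ν - u + 1)}, MeasurableSpace.measurableSet_top, ?_⟩
        ext ω; simp [hY]
      · by_cases htν : t = ν
        · simp [htν]
        · rw [if_neg htν]
          have hcle : MeasurableSpace.comap (R t) inferInstance ≤ genFilt R t :=
            le_iSup₂ (f := fun i (_ : i ∈ Set.Icc 1 t) => MeasurableSpace.comap (R i) inferInstance)
              t ⟨ht.1, le_rfl⟩
          refine hcle _ ⟨{n | b (ν - t + 1) < U t n}, MeasurableSpace.measurableSet_top, ?_⟩
          ext ω; simp [hY]
    · have hempty : {ω | τstar ω = t} = ∅ := by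
        ext ω
        simp only [Set.mem_setOf_eq, Set.mem_empty_iff_false, iff_false]
        intro h
        have := hrange ω
        omega
      rw [hempty]
      exact @MeasurableSet.empty _ (genFilt R t)
  -- equality by backward induction for τstar
  have keyeq : ∀ (k t : ℕ), t + k = ν → 1 ≤ t →
      ∑ s ∈ Finset.Icc t ν, ∫ ω, ({ω' | τstar ω' = s}.indicator (Y s)) ω ∂μ
        = (μ {ω | t ≤ τstar ω}).toReal * b (k + 2) := by
    intro k
    induction k with
    | zero =>
      intro t htk ht1
      have ht : t = ν := by omega
      subst ht
      rw [Finset.Icc_self, Finset.sum_singleton]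
      have hset : {ω' | τstar ω' = t} = {ω | t ≤ τstar ω} := by
        ext ω
        have h2 := (hrange ω).2
        simp only [Set.mem_setOf_eq]
        omega
      rw [hset, hYfun t,
        hfact _ (t - 1) t (U t) (hge_gen τstar hstop (t - 1) t (by omega)) (by omega) le_rfl,
        ← hb2]
    | succ k ih =>
      intro t htk ht1
      have hsplit : Finset.Icc t ν = insert t (Finset.Icc (t + 1) ν) := by
        ext x; simp only [Finset.mem_insert, Finset.mem_Icc]; omega
      have hnotmem : t ∉ Finset.Icc (t + 1) ν := by simp
      have hAup : MeasurableSet[genFilt R t] {ω | t + 1 ≤ τstar ω} :=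
        hge_gen τstar hstop t (t + 1) le_rfl
      have hAt : MeasurableSet[genFilt R (t - 1)] {ω | t ≤ τstar ω} :=
        hge_gen τstar hstop (t - 1) t (by omega)
      have hiY : Integrable ({ω' | τstar ω' = t}.indicator (Y t)) μ := by
        rw [hYfun t]
        exact (hintg (U t) t ht1 (by omega)).indicator (hle t _ (hstop.2 t))
      have hiB : Integrable ({ω | t + 1 ≤ τstar ω}.indicator (fun _ => b (k + 2))) μ :=
        (integrable_const _).indicator (hle t _ hAup)
      have hchar : ∀ ω, t ≤ τstar ω →
          (b (k + 2) < Y t ω → τstar ω = t) ∧ (¬ b (k + 2) < Y t ω → t + 1 ≤ τstar ω) := by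
        intro ω hge
        have hbeq : b (ν - t + 1) = b (k + 2) := by rw [show ν - t + 1 = k + 2 from by omega]
        constructor
        · intro hy
          refine le_antisymm ?_ hge
          rw [hτstar ω]
          exact Nat.sInf_le (Or.inl ⟨Set.mem_Icc.mpr ⟨ht1, by omega⟩, by rw [hbeq]; exact hy⟩)
        · intro hy
          rw [hτstar ω]
          refine le_csInf ⟨ν, Or.inr rfl⟩ ?_
          rintro a (⟨ha1, ha2⟩ | ha)
          · have hta : t ≤ a := by
              have hsle := Nat.sInf_le
                (s := {u | u ∈ Set.Icc 1 (ν - 1) ∧ Y u ω > b (ν - u + 1)} ∪ {ν})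
                (Or.inl ⟨ha1, ha2⟩)
              rw [← hτstar ω] at hsle
              omega
            by_contra h'
            have hat : a = t := by omega
            subst hat
            rw [hbeq] at ha2
            exact hy ha2
          · rw [Set.mem_singleton_iff] at ha
            omega
      have hpteq : ∀ ω, ({ω' | τstar ω' = t}.indicator (Y t)) ω
            + ({ω | t + 1 ≤ τstar ω}.indicator (fun _ => b (k + 2))) ω
          = ({ω | t ≤ τstar ω}.indicator (fun ω => max (b (k + 2)) (Y t ω))) ω := by
        intro ω
        by_cases h3 : t ≤ τstar ω
        · by_cases hy : b (k + 2) < Y t ω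
          · have h1 : τstar ω = t := (hchar ω h3).1 hy
            have h2 : ¬ (t + 1 ≤ τstar ω) := by omega
            simp [Set.indicator_apply, Set.mem_setOf_eq, h1, h2, h3,
              max_eq_right (le_of_lt hy)]
          · have h2 : t + 1 ≤ τstar ω := (hchar ω h3).2 hy
            have h1 : ¬ τstar ω = t := by omega
            simp [Set.indicator_apply, Set.mem_setOf_eq, h1, h2, h3,
              max_eq_left (not_lt.mp hy), (show t < τstar ω by omega)]
        · have h1 : ¬ τstar ω = t := by omega
          have h2 : ¬ (t + 1 ≤ τstar ω) := by omega
          simp [Set.indicator_apply, Set.mem_setOf_eq, h1, h2, h3, (show ¬ t < τstar ω by omega)]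
      have hbstep : b (k + 3) = (t : ℝ)⁻¹ * ∑ r ∈ Finset.Icc 1 t, max (b (k + 2)) (U t r) := by
        have h := hbrec (k + 2) (by omega) (by omega)
        rw [show ν - (k + 2) + 1 = t from by omega] at h
        exact h
      calc ∑ s ∈ Finset.Icc t ν, ∫ ω, ({ω' | τstar ω' = s}.indicator (Y s)) ω ∂μ
          = ∫ ω, ({ω' | τstar ω' = t}.indicator (Y t)) ω ∂μ
            + ∑ s ∈ Finset.Icc (t + 1) ν, ∫ ω, ({ω' | τstar ω' = s}.indicator (Y s)) ω ∂μ := by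
            rw [hsplit, Finset.sum_insert hnotmem]
        _ = ∫ ω, ({ω' | τstar ω' = t}.indicator (Y t)) ω ∂μ
            + (μ {ω | t + 1 ≤ τstar ω}).toReal * b (k + 2) := by
            rw [ih (t + 1) (by omega) (by omega)]
        _ = ∫ ω, ({ω' | τstar ω' = t}.indicator (Y t)) ω ∂μ
            + ∫ ω, ({ω | t + 1 ≤ τstar ω}.indicator (fun _ => b (k + 2))) ω ∂μ := by
            rw [integral_indicator_const _ (hle t _ hAup), smul_eq_mul, measureReal_def]
        _ = ∫ ω, (({ω' | τstar ω' = t}.indicator (Y t)) ω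
            + ({ω | t + 1 ≤ τstar ω}.indicator (fun _ => b (k + 2))) ω) ∂μ :=
            (integral_add hiY hiB).symm
        _ = ∫ ω, ({ω | t ≤ τstar ω}.indicator (fun ω => max (b (k + 2)) (Y t ω))) ω ∂μ :=
            integral_congr_ae (Filter.Eventually.of_forall hpteq)
        _ = (μ {ω | t ≤ τstar ω}).toReal
            * ((t : ℝ)⁻¹ * ∑ r ∈ Finset.Icc 1 t, max (b (k + 2)) (U t r)) := by
            simp only [hYfun]
            exact hfact _ (t - 1) t (fun r => max (b (k + 2)) (U t r)) hAt (by omega) (by omega)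
        _ = (μ {ω | t ≤ τstar ω}).toReal * b (k + 1 + 2) := by rw [← hbstep]
  -- assembly
  have hmu1 : ∀ (τ : Ω → ℕ), IsStopTime R ν τ → (μ {ω | 1 ≤ τ ω}).toReal = 1 := by
    intro τ hτ
    have huniv : {ω | 1 ≤ τ ω} = Set.univ := Set.eq_univ_of_forall fun ω => (hτ.1 ω).1
    rw [huniv, measure_univ, ENNReal.toReal_one]
  have hfinal : ∫ ω, Y (τstar ω) ω ∂μ = b (ν + 1) := by
    rw [hsum τstar hstop]
    have h := keyeq (ν - 1) 1 (by omega) le_rfl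
    rw [hmu1 τstar hstop, one_mul, show ν - 1 + 2 = ν + 1 from by omega] at h
    exact h
  refine ⟨hfinal, ⟨⟨τstar, hstop, hfinal.symm⟩, ?_⟩⟩
  rintro x ⟨τ, hτ, rfl⟩
  rw [hsum τ hτ]
  have h := keyle τ hτ (ν - 1) 1 (by omega) le_rfl
  rw [hmu1 τ hτ, one_mul, show ν - 1 + 2 = ν + 1 from by omega] at h
  exact h
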